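/- Let f : ℝ → ℝ be C¹, not identically zero, with f(x) → 0 and f'(x) → 0 as x → +∞ and as x → −∞. Then f' attains a global minimum and a global maximum on ℝ: there exist a, b ∈ ℝ with f'(a) ≤ f'(x) ≤ f'(b) for all x ∈ ℝ, and moreover f'(a) < 0 < f'(b); in particular f'(a)·f'(b) < 0. -/

import Mathlib

open Filter Set

/-- MVT helper: find a point where `deriv f` equals the slope. -/
lemma slope_point (f : ℝ → ℝ) (hf : ContDiff ℝ 1 f) {u v : ℝ} (huv : u < v) :
    ∃ c, deriv f c = (f v - f u) / (v - u) := by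
  obtain ⟨c, _, hc⟩ := exists_deriv_eq_slope f huv
    ((hf.continuous).continuousOn) ((hf.differentiable one_ne_zero).differentiableOn)
  exact ⟨c, hc⟩

theorem stmt_10 (f : ℝ → ℝ) (hf : ContDiff ℝ 1 f) (hne : ¬ ∀ x : ℝ, f x = 0)
    (htop : Filter.Tendsto f Filter.atTop (nhds 0))
    (hbot : Filter.Tendsto f Filter.atBot (nhds 0))
    (htop' : Filter.Tendsto (deriv f) Filter.atTop (nhds 0))
    (hbot' : Filter.Tendsto (deriv f) Filter.atBot (nhds 0)) :
    ∃ a b : ℝ, (∀ x : ℝ, deriv f a ≤ deriv f x ∧ deriv f x ≤ deriv f b)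
      ∧ deriv f a < 0 ∧ 0 < deriv f b ∧ deriv f a * deriv f b < 0 := by
  push_neg at hne
  obtain ⟨x₀, hx₀⟩ := hne
  have hε : 0 < |f x₀| := abs_pos.2 hx₀
  -- eventually |f x| < |f x₀| at top and at bot
  have hsmall : ∀ᶠ x in atTop, |f x| < |f x₀| := by
    have := htop.eventually (Metric.ball_mem_nhds 0 hε)
    filter_upwards [this] with x hx
    simpa [Real.dist_eq] using hx
  have hsmall' : ∀ᶠ x in atBot, |f x| < |f x₀| := by
    have := hbot.eventually (Metric.ball_mem_nhds 0 hε)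
    filter_upwards [this] with x hx
    simpa [Real.dist_eq] using hx
  obtain ⟨y, hy1, hy2⟩ := (hsmall.and (eventually_gt_atTop x₀)).exists
  obtain ⟨z, hz1, hz2⟩ := (hsmall'.and (eventually_lt_atBot x₀)).exists
  -- a point with negative derivative and one with positive derivative
  have hneg : ∃ c, deriv f c < 0 := by
    rcases lt_or_gt_of_ne hx₀ with h | h
    · -- f x₀ < 0 : on the left, slope (f x₀ - f z)/(x₀ - z) < 0
      obtain ⟨c, hc⟩ := slope_point f hf hz2
      refine ⟨c, hc ▸ div_neg_of_neg_of_pos ?_ (by linarith)⟩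
      have : f x₀ < f z := by
        have := neg_abs_le (f z)
        have h2 : -|f x₀| < f z := by linarith [abs_lt.1 hz1]
        rw [abs_of_neg h] at h2; linarith
      linarith
    · -- f x₀ > 0 : on the right, slope (f y - f x₀)/(y - x₀) < 0
      obtain ⟨c, hc⟩ := slope_point f hf hy2
      refine ⟨c, hc ▸ div_neg_of_neg_of_pos ?_ (by linarith)⟩
      have : f y < f x₀ := by
        have h2 := (abs_lt.1 hy1).2
        rw [abs_of_pos h] at h2; linarith
      linarith
  have hpos : ∃ d, 0 < deriv f d := by
    rcases lt_or_gt_of_ne hx₀ with h | h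
    · obtain ⟨d, hd⟩ := slope_point f hf hy2
      refine ⟨d, hd ▸ div_pos ?_ (by linarith)⟩
      have h2 := (abs_lt.1 hy1).1
      rw [abs_of_neg h] at h2; linarith
    · obtain ⟨d, hd⟩ := slope_point f hf hz2
      refine ⟨d, hd ▸ div_pos ?_ (by linarith)⟩
      have h2 := (abs_lt.1 hz1).2
      rw [abs_of_pos h] at h2; linarith
  obtain ⟨c, hc⟩ := hneg
  obtain ⟨d, hd⟩ := hpos
  have hcont : Continuous (deriv f) := hf.continuous_deriv le_rfl
  have hco : Tendsto (deriv f) (cocompact ℝ) (nhds 0) := by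
    rw [cocompact_eq_atBot_atTop]; exact tendsto_sup.2 ⟨hbot', htop'⟩
  obtain ⟨a, ha⟩ := hcont.exists_forall_le' c
    ((hco.eventually (lt_mem_nhds hc)).mono fun x hx => hx.le)
  obtain ⟨b, hb⟩ := hcont.exists_forall_ge' d
    ((hco.eventually (gt_mem_nhds hd)).mono fun x hx => hx.le)
  have hA : deriv f a < 0 := lt_of_le_of_lt (ha c) hc
  have hB : 0 < deriv f b := lt_of_lt_of_le hd (hb d)
  exact ⟨a, b, fun x => ⟨ha x, hb x⟩, hA, hB, mul_neg_of_neg_of_pos hA hB⟩
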